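/- arXiv:2404.18483 — 3 statements merged into one kernel-verified Lean document; each statement's English description precedes it below -/
import Mathlib

section
/- Let C be a triangulated category and D ⊆ C a thick triangulated subcategory such that: (1) D is connected, and (2) every nonzero thick subcategory T of C satisfies D ∩ T ≠ 0. Then C is connected. -/
/-!
STATEMENT 7: If `D ⊆ C` is a connected thick triangulated subcategory meeting every
nonzero thick subcategory of `C` nontrivially, then `C` is connected.
-/

open CategoryTheory Limits Pretriangulated Triangulated ZeroObject

universe v u

namespace CategoryTheory.Triangulated

/-- The Mathlib (Dec 2024) structure of a triangulated subcategory, removed since. -/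
structure Subcategory (C : Type*) [Category C] [HasZeroObject C] [HasShift C ℤ] [Preadditive C]
    [∀ n : ℤ, (shiftFunctor C n).Additive] [Pretriangulated C] where
  P : C → Prop
  zero' : ∃ (Z : C) (_ : IsZero Z), P Z
  shift (X : C) (n : ℤ) : P X → P (X⟦n⟧)
  ext₂' (T : Triangle C) (_ : T ∈ distTriang C) : P T.obj₁ → P T.obj₃ →
    ObjectProperty.isoClosure P T.obj₂

end CategoryTheory.Triangulated

section Defs

variable {E : Type u} [Category.{v} E] [HasZeroObject E] [HasShift E ℤ] [Preadditive E]
  [∀ n : ℤ, (shiftFunctor E n).Additive] [Pretriangulated E]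

/-- The iterated binary biproduct of a list of objects. -/
noncomputable def sumList : List E → E
  | [] => 0
  | X :: l => X ⊞ sumList l

/-- A triangulated subcategory is thick if it is closed under direct summands. -/
def IsThick (S : Triangulated.Subcategory E) : Prop :=
  ∀ (X Y Z : E), Nonempty (Z ≅ X ⊞ Y) → S.P Z → S.P X

/-- There are no nonzero morphisms from objects satisfying `P` to objects satisfying `Q`. -/
def HomOrth (P Q : E → Prop) : Prop :=
  ∀ ⦃X Y : E⦄ (f : X ⟶ Y), P X → Q Y → f = 0

/-- The class of objects `P` (e.g. the objects of a triangulated subcategory, or the whole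
category via `P = fun _ => True`) is connected: it contains a nonzero object, and for any two
triangulated subcategories `S₁, S₂` contained in `P`, with no morphisms between them in either
direction, such that every object satisfying `P` decomposes as a direct sum of an object of
`S₁` and an object of `S₂`, one of `S₁`, `S₂` consists of zero objects only. -/
def IsConnectedP (P : E → Prop) : Prop :=
  (∃ X : E, P X ∧ ¬ IsZero X) ∧
  ∀ S₁ S₂ : Triangulated.Subcategory E,
    (∀ X, S₁.P X → P X) → (∀ X, S₂.P X → P X) →
    HomOrth S₁.P S₂.P → HomOrth S₂.P S₁.P →
    (∀ X, P X → ∃ X₁ X₂, S₁.P X₁ ∧ S₂.P X₂ ∧ Nonempty (X ≅ X₁ ⊞ X₂)) →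
    (∀ X, S₁.P X → IsZero X) ∨ (∀ X, S₂.P X → IsZero X)

/-- The family of triangulated subcategories `S j` realizes the ambient category as the
direct sum `⊕_j S j`: each `S j` is closed under isomorphisms, there are no nonzero morphisms
between distinct summands, and every object is a finite direct sum of objects of the `S j`. -/
def IsDirectSumDecomp {ι : Type*} (S : ι → Triangulated.Subcategory E) : Prop :=
  (∀ i, ObjectProperty.IsClosedUnderIsomorphisms (S i).P) ∧
  (∀ i j, i ≠ j → HomOrth (S i).P (S j).P) ∧
  (∀ X : E, ∃ l : List E, (∀ Y ∈ l, ∃ i, (S i).P Y) ∧ Nonempty (X ≅ sumList l))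

/-- An object is indecomposable if it is nonzero and in any direct sum decomposition
one of the summands is zero. -/
def Indec (X : E) : Prop :=
  ¬ IsZero X ∧ ∀ (Y Z : E), Nonempty (X ≅ Y ⊞ Z) → IsZero Y ∨ IsZero Z

/-- A Krull–Remak–Schmidt triangulated category: every object is a finite direct sum of
objects with local endomorphism rings. -/
def IsKrullSchmidtCat : Prop :=
  ∀ X : E, ∃ l : List E, (∀ Y ∈ l, IsLocalRing (End Y)) ∧ Nonempty (X ≅ sumList l)

/-- `thickClosure X` is the class of objects of the smallest thick subcategory
containing `X`. -/
def thickClosure (X Y : E) : Prop :=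
  ∀ S : Triangulated.Subcategory E, IsThick S → S.P X → S.P Y

end Defs

namespace CategoryTheory.Triangulated.Subcategory

variable {E : Type u} [Category.{v} E] [HasZeroObject E] [HasShift E ℤ] [Preadditive E]
  [∀ n : ℤ, (shiftFunctor E n).Additive] [Pretriangulated E]

/-- The iso-closure of a triangulated subcategory. -/
def isoClosure (S : Subcategory E) : Subcategory E where
  P := ObjectProperty.isoClosure S.P
  zero' := by
    obtain ⟨Z, hZ, hZ'⟩ := S.zero'
    exact ⟨Z, hZ, Z, hZ', ⟨Iso.refl _⟩⟩
  shift X n := by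
    rintro ⟨Y, hY, ⟨e⟩⟩
    exact ⟨Y⟦n⟧, S.shift Y n hY, ⟨(shiftFunctor E n).mapIso e⟩⟩
  ext₂' := by
    rintro T hT ⟨X₁, h₁, ⟨e₁⟩⟩ ⟨X₃, h₃, ⟨e₃⟩⟩
    exact ObjectProperty.le_isoClosure _ _
      (S.ext₂' (Triangle.mk (e₁.inv ≫ T.mor₁) (T.mor₂ ≫ e₃.hom) (e₃.inv ≫ T.mor₃ ≫ e₁.hom⟦1⟧'))
      (isomorphic_distinguished _ hT _
        (Triangle.isoMk _ _ e₁.symm (Iso.refl _) e₃.symm (by exact Category.comp_id _) (by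
          change (T.mor₂ ≫ e₃.hom) ≫ e₃.inv = 𝟙 T.obj₂ ≫ T.mor₂
          rw [Category.assoc, Iso.hom_inv_id, Category.comp_id, Category.id_comp]) (by
          change (e₃.inv ≫ T.mor₃ ≫ (shiftFunctor E 1).map e₁.hom) ≫
            (shiftFunctor E 1).map e₁.inv = e₃.inv ≫ T.mor₃
          rw [Category.assoc, Category.assoc, ← Functor.map_comp, Iso.hom_inv_id,
            Functor.map_id, Category.comp_id]))) h₁ h₃)

instance (S : Subcategory E) : ObjectProperty.IsClosedUnderIsomorphisms S.isoClosure.P :=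
  inferInstanceAs (ObjectProperty.IsClosedUnderIsomorphisms (ObjectProperty.isoClosure S.P))

end CategoryTheory.Triangulated.Subcategory

section Aux

variable {E : Type u} [Category.{v} E] [HasZeroObject E] [HasShift E ℤ] [Preadditive E]
  [∀ n : ℤ, (shiftFunctor E n).Additive] [Pretriangulated E]

lemma thick_isoClosed {S : Triangulated.Subcategory E} (h : IsThick S) {X Y : E}
    (e : X ≅ Y) (hY : S.P Y) : S.P X :=
  h X 0 Y ⟨e.symm ≪≫ isoBiprodZero (isZero_zero E)⟩ hY

lemma homOrth_isoClosure {P Q : E → Prop} (h : HomOrth P Q) :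
    HomOrth (ObjectProperty.isoClosure P) (ObjectProperty.isoClosure Q) := by
  rintro X Y f ⟨X', hX', ⟨eX⟩⟩ ⟨Y', hY', ⟨eY⟩⟩
  have h0 : eX.inv ≫ f ≫ eY.hom = 0 := h _ hX' hY'
  calc f = eX.hom ≫ (eX.inv ≫ f ≫ eY.hom) ≫ eY.inv := by simp
  _ = 0 := by rw [h0]; simp

/-- The intersection of a thick subcategory with the iso-closure of another subcategory. -/
noncomputable def interSub (D S : Triangulated.Subcategory E) (hD : IsThick D) :
    Triangulated.Subcategory E where
  P X := D.P X ∧ S.isoClosure.P X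
  zero' := by
    obtain ⟨Z, hZ, hZP⟩ := D.zero'
    obtain ⟨Z', hZ', hZ'P⟩ := S.zero'
    exact ⟨Z, hZ, hZP, ⟨Z', hZ'P, ⟨hZ.isoZero ≪≫ hZ'.isoZero.symm⟩⟩⟩
  shift X n h := ⟨D.shift X n h.1, S.isoClosure.shift X n h.2⟩
  ext₂' T hT h₁ h₃ := by
    refine ObjectProperty.le_isoClosure _ _ ⟨?_, ?_⟩
    · obtain ⟨Y, hY, ⟨e⟩⟩ := D.ext₂' T hT h₁.1 h₃.1
      exact thick_isoClosed hD e hY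
    · obtain ⟨Y, hY, ⟨e⟩⟩ := S.isoClosure.ext₂' T hT h₁.2 h₃.2
      exact ObjectProperty.prop_of_iso _ e.symm hY

lemma isoClosure_thick_of_decomp {S₁ S₂ : Triangulated.Subcategory E}
    (h21 : HomOrth S₂.P S₁.P)
    (hdec : ∀ X : E, ∃ X₁ X₂, S₁.P X₁ ∧ S₂.P X₂ ∧ Nonempty (X ≅ X₁ ⊞ X₂)) :
    IsThick S₁.isoClosure := by
  rintro X Y Z ⟨e⟩ ⟨Z', hZ', ⟨eZ⟩⟩
  obtain ⟨A₁, A₂, hA₁, hA₂, ⟨eX⟩⟩ := hdec X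
  have hu : (biprod.inr ≫ eX.inv ≫ biprod.inl ≫ e.inv ≫ eZ.hom : A₂ ⟶ Z') = 0 :=
    h21 _ hA₂ hZ'
  have hzero : IsZero A₂ := by
    rw [IsZero.iff_id_eq_zero]
    have : (biprod.inr ≫ eX.inv ≫ biprod.inl ≫ e.inv ≫ eZ.hom : A₂ ⟶ Z') ≫
        (eZ.inv ≫ e.hom ≫ biprod.fst ≫ eX.hom ≫ biprod.snd) = 𝟙 A₂ := by simp
    rw [← this, hu, zero_comp]
  exact ⟨A₁, hA₁, ⟨eX ≪≫ (isoBiprodZero hzero).symm⟩⟩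

end Aux

theorem stmt7 {C : Type u} [Category.{v} C] [HasZeroObject C] [HasShift C ℤ] [Preadditive C]
    [∀ n : ℤ, (shiftFunctor C n).Additive] [Pretriangulated C]
    (D : Triangulated.Subcategory C) (hDthick : IsThick D) (hDconn : IsConnectedP D.P)
    (hmeet : ∀ T : Triangulated.Subcategory C, IsThick T →
      (∃ X, T.P X ∧ ¬ IsZero X) → ∃ X, D.P X ∧ T.P X ∧ ¬ IsZero X) :
    IsConnectedP (fun _ : C => True) := by
  constructor
  · obtain ⟨X, _, hX0⟩ := hDconn.1
    exact ⟨X, trivial, hX0⟩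
  · intro S₁ S₂ _ _ h12 h21 hdec
    have hdec' : ∀ X : C, ∃ X₁ X₂, S₁.P X₁ ∧ S₂.P X₂ ∧ Nonempty (X ≅ X₁ ⊞ X₂) :=
      fun X => hdec X trivial
    have hdec'' : ∀ X : C, ∃ X₁ X₂, S₂.P X₁ ∧ S₁.P X₂ ∧ Nonempty (X ≅ X₁ ⊞ X₂) := by
      intro X
      obtain ⟨X₁, X₂, h1, h2, ⟨e⟩⟩ := hdec' X
      exact ⟨X₂, X₁, h2, h1, ⟨e ≪≫ biprod.braiding _ _⟩⟩
    have thick1 : IsThick S₁.isoClosure := isoClosure_thick_of_decomp h21 hdec'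
    have thick2 : IsThick S₂.isoClosure := isoClosure_thick_of_decomp h12 hdec''
    have h12' := homOrth_isoClosure h12
    have h21' := homOrth_isoClosure h21
    have key := hDconn.2 (interSub D S₁ hDthick) (interSub D S₂ hDthick)
      (fun X h => h.1) (fun X h => h.1)
      (fun X Y f hX hY => h12' f hX.2 hY.2)
      (fun X Y f hX hY => h21' f hX.2 hY.2) ?_
    · rcases key with h | h
      · left
        intro X hX1
        by_contra hne
        obtain ⟨Y, hYD, hYT, hY0⟩ := hmeet S₁.isoClosure thick1
          ⟨X, ObjectProperty.le_isoClosure _ _ hX1, hne⟩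
        exact hY0 (h Y ⟨hYD, hYT⟩)
      · right
        intro X hX2
        by_contra hne
        obtain ⟨Y, hYD, hYT, hY0⟩ := hmeet S₂.isoClosure thick2
          ⟨X, ObjectProperty.le_isoClosure _ _ hX2, hne⟩
        exact hY0 (h Y ⟨hYD, hYT⟩)
    · intro X hX
      obtain ⟨X₁, X₂, h1, h2, ⟨e⟩⟩ := hdec' X
      exact ⟨X₁, X₂, ⟨hDthick X₁ X₂ X ⟨e⟩ hX, ObjectProperty.le_isoClosure _ _ h1⟩,
        ⟨hDthick X₂ X₁ X ⟨e ≪≫ biprod.braiding _ _⟩ hX, ObjectProperty.le_isoClosure _ _ h2⟩, ⟨e⟩⟩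
end

section
/- Let (A, m) be a commutative Noetherian local ring. Then the homotopy category K^b(proj A) of bounded complexes of finitely generated projective A-modules is a connected triangulated category. -/
/-!
STATEMENT 11: For a commutative Noetherian local ring `(A, 𝔪)`, the homotopy category
`K^b(proj A)` of bounded complexes of finitely generated projective `A`-modules is
connected. It is formalized as the subcategory of the homotopy category of cochain
complexes of `A`-modules consisting of objects isomorphic to a bounded complex of
finitely generated projective modules.
-/

open CategoryTheory Limits Pretriangulated Triangulated ZeroObject

universe v u

/-- Membership in `K^b(proj A)`: objects of the homotopy category isomorphic to a bounded
complex of finitely generated projective modules. -/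
def KbProjP (A : Type u) [CommRing A]
    (X : HomotopyCategory (ModuleCat.{u} A) (ComplexShape.up ℤ)) : Prop :=
  ∃ Y : CochainComplex (ModuleCat.{u} A) ℤ,
    (∀ n : ℤ, Module.Finite A (Y.X n) ∧ Projective (Y.X n)) ∧
    (∃ a b : ℤ, ∀ n : ℤ, (n < a ∨ b < n) → IsZero (Y.X n)) ∧
    Nonempty (X ≅ (HomotopyCategory.quotient (ModuleCat.{u} A) (ComplexShape.up ℤ)).obj Y)

section Contract
variable {A : Type u} [CommRing A] (Z : CochainComplex (ModuleCat.{u} A) ℤ)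

lemma lift_step (hproj : ∀ n, Projective (Z.X n))
    (hex : ∀ m n, m + 1 = n → ∀ z : Z.X n, Z.d n (n+1) z = 0 → ∃ w : Z.X m, Z.d m n w = z)
    (m n : ℤ) (hmn : m + 1 = n) (τ : Z.X n ⟶ Z.X n) (hτ : τ ≫ Z.d n (n+1) = 0) :
    ∃ s : Z.X n ⟶ Z.X m, s ≫ Z.d m n = τ := by
  subst hmn
  let K := ModuleCat.of A (LinearMap.ker (Z.d (m+1) (m+1+1)).hom)
  have hd : ∀ w : Z.X m, Z.d (m+1) (m+1+1) (Z.d m (m+1) w) = 0 := by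
    intro w
    have h := Z.d_comp_d m (m+1) (m+1+1)
    calc Z.d (m+1) (m+1+1) (Z.d m (m+1) w) = (Z.d m (m+1) ≫ Z.d (m+1) (m+1+1)) w := rfl
    _ = (0 : Z.X m ⟶ Z.X (m+1+1)) w := by rw [h]
    _ = 0 := rfl
  let e : Z.X m ⟶ K := ModuleCat.ofHom (LinearMap.codRestrict _ (Z.d m (m+1)).hom (fun w => by
    simpa [LinearMap.mem_ker] using hd w))
  have he : Epi e := by
    rw [ModuleCat.epi_iff_surjective]
    rintro ⟨z, hz⟩
    rw [LinearMap.mem_ker] at hz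
    obtain ⟨w, hw⟩ := hex m (m+1) rfl z hz
    exact ⟨w, Subtype.ext hw⟩
  let g : Z.X (m+1) ⟶ K := ModuleCat.ofHom (LinearMap.codRestrict _ τ.hom (fun x => by
    simpa [LinearMap.mem_ker] using ConcreteCategory.congr_hom hτ x))
  haveI := hproj (m+1)
  refine ⟨Projective.factorThru g e, ?_⟩
  have hfc := Projective.factorThru_comp g e
  ext x
  have h2 : e ((Projective.factorThru g e) x) = g x := ConcreteCategory.congr_hom hfc x
  have h3 := congrArg Subtype.val h2
  exact h3
end Contract

section Contract2
variable {A : Type u} [CommRing A] (Z : CochainComplex (ModuleCat.{u} A) ℤ) (b : ℤ)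
  (hb : ∀ n, b < n → IsZero (Z.X n))
  (hproj : ∀ n, Projective (Z.X n))
  (hex : ∀ m n, m + 1 = n → ∀ z : Z.X n, Z.d n (n+1) z = 0 → ∃ w : Z.X m, Z.d m n w = z)

/-- The data carried in the descending recursion. -/
def TT (n : ℤ) : Type u :=
  Σ' (t : Z.X (n+1) ⟶ Z.X n) (u : Z.X (n+1+1) ⟶ Z.X (n+1)),
    t ≫ Z.d n (n+1) + Z.d (n+1) (n+1+1) ≫ u = 𝟙 (Z.X (n+1))

/-- The base case: above degree `b` everything is zero. -/
def ttBase (n : ℤ) (h : b < n + 1) : TT Z n :=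
  ⟨0, 0, (hb (n+1) h).eq_of_src _ _⟩

/-- The inductive step. -/
noncomputable def ttStep (n : ℤ) (p : TT Z (n+1)) : TT Z n :=
  have hinv : Z.d (n+1) (n+1+1) ≫ p.1 ≫ Z.d (n+1) (n+1+1) = Z.d (n+1) (n+1+1) := by
    have h := p.2.2
    calc Z.d (n+1) (n+1+1) ≫ p.1 ≫ Z.d (n+1) (n+1+1)
        = Z.d (n+1) (n+1+1) ≫ (p.1 ≫ Z.d (n+1) (n+1+1)
          + Z.d (n+1+1) (n+1+1+1) ≫ p.2.1) - Z.d (n+1) (n+1+1)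
            ≫ Z.d (n+1+1) (n+1+1+1) ≫ p.2.1 := by
          rw [CategoryTheory.Preadditive.comp_add]; abel
    _ = Z.d (n+1) (n+1+1) := by
          rw [h, CategoryTheory.Category.comp_id, Z.d_comp_d_assoc, Limits.zero_comp,
            sub_zero]
  have hτ : (𝟙 (Z.X (n+1)) - Z.d (n+1) (n+1+1) ≫ p.1) ≫ Z.d (n+1) (n+1+1) = 0 := by
    rw [CategoryTheory.Preadditive.sub_comp, CategoryTheory.Category.id_comp,
      CategoryTheory.Category.assoc, hinv, sub_self]
  have hs := lift_step Z hproj hex n (n+1) rfl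
    (𝟙 (Z.X (n+1)) - Z.d (n+1) (n+1+1) ≫ p.1) hτ
  ⟨hs.choose, p.1, by rw [hs.choose_spec]; abel⟩

/-- The full recursion. -/
noncomputable def tAux : (n : ℤ) → TT Z n := fun n =>
  if h : b ≤ n then ttBase Z b hb n (by omega)
  else ttStep Z hproj hex n (tAux (n+1))
  termination_by n => (b - n).toNat
  decreasing_by simp; omega

lemma tAux_rel (n : ℤ) :
    (tAux Z b hb hproj hex n).1 ≫ Z.d n (n+1)
      + Z.d (n+1) (n+1+1) ≫ (tAux Z b hb hproj hex (n+1)).1 = 𝟙 (Z.X (n+1)) := by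
  by_cases h : b ≤ n
  · exact (hb (n+1) (by omega)).eq_of_src _ _
  · have h1 : tAux Z b hb hproj hex n = ttStep Z hproj hex n (tAux Z b hb hproj hex (n+1)) := by
      rw [tAux]; rw [dif_neg h]
    rw [h1]
    exact (ttStep Z hproj hex n (tAux Z b hb hproj hex (n+1))).2.2

lemma comm_aux (i n : ℤ) (hn : n + 1 = i) :
    𝟙 (Z.X i) = Z.d i (i+1) ≫ (tAux Z b hb hproj hex i).1
      + (CategoryTheory.eqToHom (congrArg Z.X hn.symm) ≫ (tAux Z b hb hproj hex n).1)
          ≫ Z.d n i := by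
  subst hn
  rw [CategoryTheory.eqToHom_refl, CategoryTheory.Category.id_comp]
  exact ((tAux_rel Z b hb hproj hex n).symm.trans (add_comm _ _))

/-- The contracting homotopy. -/
noncomputable def contractHomotopy : Homotopy (𝟙 Z) (0 : Z ⟶ Z) where
  hom i j := if h : j + 1 = i then
      CategoryTheory.eqToHom (congrArg Z.X h.symm) ≫ (tAux Z b hb hproj hex j).1 else 0
  zero i j h := by
    exact dif_neg (by simpa using h)
  comm i := by
    rw [dNext_eq _ (show (ComplexShape.up ℤ).Rel i (i+1) by simp),
      prevD_eq _ (show (ComplexShape.up ℤ).Rel (i-1) i by simp),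
      dif_pos rfl, dif_pos (show (i-1) + 1 = i by omega)]
    simp only [CategoryTheory.eqToHom_refl, CategoryTheory.Category.id_comp,
      HomologicalComplex.id_f, HomologicalComplex.zero_f, add_zero]
    exact comm_aux Z b hb hproj hex i (i-1) (by omega)

end Contract2

section Single
open CategoryTheory
variable (A : Type u) [CommRing A]

/-- The quotient functor to the homotopy category. -/
noncomputable abbrev QF (A : Type u) [CommRing A] :=
  HomotopyCategory.quotient (ModuleCat.{u} A) (ComplexShape.up ℤ)

/-- Abbreviation for the single complex. -/
noncomputable abbrev Sgl (j : ℤ) : CochainComplex (ModuleCat.{u} A) ℤ :=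
  (HomologicalComplex.single (ModuleCat.{u} A) (ComplexShape.up ℤ) j).obj (ModuleCat.of A A)

lemma homotopy_single_eq {j : ℤ} (c₁ c₂ : Sgl A j ⟶ Sgl A j) (h : Homotopy c₁ c₂) :
    c₁ = c₂ := by
  apply HomologicalComplex.from_single_hom_ext (j := j)
  have hc := h.comm j
  rw [dNext_eq h.hom (show (ComplexShape.up ℤ).Rel j (j+1) by simp),
    prevD_eq h.hom (show (ComplexShape.up ℤ).Rel (j-1) j by simp)] at hc
  simpa [HomologicalComplex.single_obj_d] using hc

lemma isZero_sglX (j n : ℤ) (h : n ≠ j) : Limits.IsZero ((Sgl A j).X n) :=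
  HomologicalComplex.isZero_single_obj_X _ _ _ _ h

end Single

section Single2
open CategoryTheory
variable (A : Type u) [CommRing A] [IsLocalRing A]


lemma sgl_nonzero (j : ℤ) : ¬ Limits.IsZero ((QF A).obj (Sgl A j)) := by
  intro h
  rw [HomotopyCategory.isZero_quotient_obj_iff] at h
  obtain ⟨ht⟩ := h
  have h1 := homotopy_single_eq A (𝟙 (Sgl A j)) 0 ht
  have h2 : 𝟙 ((Sgl A j).X j) = 0 := by
    have := congrArg (fun f => HomologicalComplex.Hom.f f j) h1
    simpa using this
  have h3 : Limits.IsZero ((Sgl A j).X j) := (Limits.IsZero.iff_id_eq_zero (X := (Sgl A j).X j)).mpr h2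
  have h4 : Limits.IsZero (ModuleCat.of A A) :=
    Limits.IsZero.of_iso h3 (HomologicalComplex.singleObjXSelf (ComplexShape.up ℤ) j
      (ModuleCat.of A A)).symm
  have h5 : (𝟙 (ModuleCat.of A A) : ModuleCat.of A A ⟶ ModuleCat.of A A) = 0 :=
    (Limits.IsZero.iff_id_eq_zero (X := ModuleCat.of A A)).mp h4
  have h6 : (1 : A) = 0 := by
    calc (1 : A) = (𝟙 (ModuleCat.of A A) : ModuleCat.of A A ⟶ ModuleCat.of A A) (1 : A) := rfl
    _ = (0 : ModuleCat.of A A ⟶ ModuleCat.of A A) (1 : A) := by rw [h5]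
    _ = 0 := rfl
  exact one_ne_zero h6

lemma sgl_idem (j : ℤ) (e : (QF A).obj (Sgl A j) ⟶ (QF A).obj (Sgl A j))
    (he : e ≫ e = e) : e = 0 ∨ e = 𝟙 _ := by
  obtain ⟨c, hc⟩ := (QF A).map_surjective e
  obtain ⟨u, hu⟩ := (HomologicalComplex.single (ModuleCat.{u} A)
    (ComplexShape.up ℤ) j).map_surjective c
  have hcc : c ≫ c = c := by
    apply homotopy_single_eq
    apply HomotopyCategory.homotopyOfEq
    rw [Functor.map_comp, hc, he]
  have huu : u ≫ u = u := by
    apply (HomologicalComplex.single (ModuleCat.{u} A) (ComplexShape.up ℤ) j).map_injective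
    rw [Functor.map_comp, hu, hcc]
  set a : A := u (1 : A) with ha
  have haa : a * a = a := by
    calc a * a = a • (u (1 : A)) := by rw [smul_eq_mul]
    _ = u (a • (1 : A)) := by rw [map_smul]
    _ = u (u (1 : A)) := by rw [smul_eq_mul, mul_one]
    _ = (u ≫ u) (1 : A) := rfl
    _ = u (1 : A) := by rw [huu]
  have hor : a = 0 ∨ a = 1 := by
    rcases IsLocalRing.isUnit_or_isUnit_one_sub_self a with hun | hun
    · right
      exact hun.mul_left_cancel (by rw [mul_one, haa])
    · left
      refine hun.mul_left_cancel ?_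
      rw [mul_zero, one_sub_mul, haa, sub_self]
  rcases hor with h0 | h1
  · left
    have hu0 : u = 0 := by
      apply ModuleCat.hom_ext
      apply LinearMap.ext_ring
      show u (1 : A) = (0 : ModuleCat.of A A ⟶ ModuleCat.of A A) (1 : A)
      rw [← ha, h0]
      rfl
    rw [← hc, ← hu, hu0, Functor.map_zero, Functor.map_zero]
  · right
    have hu1 : u = 𝟙 (ModuleCat.of A A) := by
      apply ModuleCat.hom_ext
      apply LinearMap.ext_ring
      show u (1 : A) = (𝟙 (ModuleCat.of A A) : ModuleCat.of A A ⟶ ModuleCat.of A A) (1 : A)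
      rw [← ha, h1]
      rfl
    rw [← hc, ← hu, hu1, CategoryTheory.Functor.map_id, CategoryTheory.Functor.map_id]

end Single2

section Exactness
open CategoryTheory
variable {A : Type u} [CommRing A]

lemma exact_of_hom_zero (Z : CochainComplex (ModuleCat.{u} A) ℤ)
    (hz : ∀ (j : ℤ) (f : (QF A).obj (Sgl A j) ⟶ (QF A).obj Z), f = 0) :
    ∀ m n, m + 1 = n → ∀ z : Z.X n, Z.d n (n+1) z = 0 → ∃ w : Z.X m, Z.d m n w = z := by
  intro m n hmn z hcoc
  subst hmn
  let φz : ModuleCat.of A A ⟶ Z.X (m+1) := ModuleCat.ofHom (LinearMap.toSpanSingleton A _ z)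
  have hφz1 : φz (1 : A) = z := by
    show (1 : A) • z = z
    rw [one_smul]
  have hφ : ∀ i, (ComplexShape.up ℤ).Rel (m+1) i → φz ≫ Z.d (m+1) i = 0 := by
    intro i hi
    have hi' : m+1+1 = i := hi
    subst hi'
    apply ModuleCat.hom_ext
    apply LinearMap.ext_ring
    show Z.d (m+1) (m+1+1) (φz (1 : A)) = (0 : ModuleCat.of A A ⟶ Z.X (m+1+1)) (1 : A)
    rw [hφz1]
    exact hcoc.trans rfl
  let c : Sgl A (m+1) ⟶ Z := HomologicalComplex.mkHomFromSingle φz hφ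
  have hc0 : (QF A).map c = (QF A).map 0 := by
    rw [Functor.map_zero]
    exact hz (m+1) ((QF A).map c)
  have H := HomotopyCategory.homotopyOfEq c 0 hc0
  have hcm := H.comm (m+1)
  rw [dNext_eq H.hom (show (ComplexShape.up ℤ).Rel (m+1) (m+1+1) by simp),
    prevD_eq H.hom (show (ComplexShape.up ℤ).Rel m (m+1) by simp)] at hcm
  simp only [HomologicalComplex.single_obj_d, Limits.zero_comp,
    HomologicalComplex.zero_f, add_zero, zero_add] at hcm
  set u0 : (Sgl A (m+1)).X (m+1) :=
    (HomologicalComplex.singleObjXSelf (ComplexShape.up ℤ) (m+1) (ModuleCat.of A A)).inv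
      (1 : A) with hu0
  refine ⟨H.hom (m+1) m u0, ?_⟩
  have h1 : c.f (m+1) u0 = z := by
    rw [HomologicalComplex.mkHomFromSingle_f]
    show φz ((HomologicalComplex.singleObjXSelf (ComplexShape.up ℤ) (m+1)
      (ModuleCat.of A A)).hom ((HomologicalComplex.singleObjXSelf (ComplexShape.up ℤ) (m+1)
      (ModuleCat.of A A)).inv (1 : A))) = z
    have : ∀ y, (HomologicalComplex.singleObjXSelf (ComplexShape.up ℤ) (m+1)
        (ModuleCat.of A A)).hom ((HomologicalComplex.singleObjXSelf (ComplexShape.up ℤ) (m+1)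
        (ModuleCat.of A A)).inv y) = y := by
      intro y
      show ((HomologicalComplex.singleObjXSelf (ComplexShape.up ℤ) (m+1)
        (ModuleCat.of A A)).inv ≫ (HomologicalComplex.singleObjXSelf (ComplexShape.up ℤ) (m+1)
        (ModuleCat.of A A)).hom) y = y
      rw [Iso.inv_hom_id]
      rfl
    rw [this, hφz1]
  have h2 := ConcreteCategory.congr_hom hcm u0
  show Z.d m (m+1) (H.hom (m+1) m u0) = z
  rw [← h1]
  exact (h2).symm
end Exactness

section Main
open CategoryTheory
variable (A : Type u) [CommRing A]

lemma projective_of_isZero {M : ModuleCat.{u} A} (h : Limits.IsZero M) : Projective M :=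
  ⟨fun {E X} f e _ => ⟨0, h.eq_of_src _ _⟩⟩

lemma subsingleton_of_isZero {M : ModuleCat.{u} A} (h : Limits.IsZero M) : Subsingleton M := by
  have hid : (𝟙 M : M ⟶ M) = 0 := (Limits.IsZero.iff_id_eq_zero M).mp h
  refine ⟨fun a b => ?_⟩
  have ha : a = (𝟙 M : M ⟶ M) a := rfl
  have hb : b = (𝟙 M : M ⟶ M) b := rfl
  rw [ha, hb, hid]
  rfl

lemma finite_of_isZero {M : ModuleCat.{u} A} (h : Limits.IsZero M) : Module.Finite A M := by
  haveI := subsingleton_of_isZero A h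
  exact ⟨⟨∅, Subsingleton.elim _ _⟩⟩

lemma kbProj_sgl (j : ℤ) : KbProjP A ((QF A).obj (Sgl A j)) := by
  refine ⟨Sgl A j, ?_, ⟨j, j, fun n hn => isZero_sglX A j n (by omega)⟩, ⟨Iso.refl _⟩⟩
  intro n
  by_cases h : n = j
  · subst h
    have i := HomologicalComplex.singleObjXSelf (ComplexShape.up ℤ) n (ModuleCat.of A A)
    constructor
    · haveI : Module.Finite A (ModuleCat.of A A) := Module.Finite.self A
      exact Module.Finite.equiv i.symm.toLinearEquiv
    · refine Projective.of_iso i.symm ?_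
      exact ModuleCat.projective_of_free (Module.Basis.singleton PUnit.{u+1} A)
  · have hz := isZero_sglX A j n h
    exact ⟨finite_of_isZero A hz, projective_of_isZero A hz⟩

lemma kill (S T : Triangulated.Subcategory
      (HomotopyCategory (ModuleCat.{u} A) (ComplexShape.up ℤ)))
    (horth : HomOrth S.P T.P) (hT : ∀ X, T.P X → KbProjP A X)
    (X₁ X₂ : HomotopyCategory (ModuleCat.{u} A) (ComplexShape.up ℤ))
    (hX₁ : S.P X₁) (hX₂ : Limits.IsZero X₂)
    (φ : (QF A).obj (Sgl A 0) ≅ X₁ ⊞ X₂) :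
    ∀ Y, T.P Y → Limits.IsZero Y := by
  intro Y hY
  obtain ⟨Z, hZ, ⟨a, b, hbd⟩, ⟨ε⟩⟩ := hT Y hY
  have key : ∀ (j : ℤ) (g : (QF A).obj (Sgl A j) ⟶ Y), g = 0 := by
    intro j g
    let σ : (shiftFunctor (HomotopyCategory (ModuleCat.{u} A) (ComplexShape.up ℤ)) (-j)).obj
        ((QF A).obj (Sgl A 0)) ≅ (QF A).obj (Sgl A j) :=
      ((HomotopyCategory.singleFunctors (ModuleCat.{u} A)).shiftIso (-j) j 0
        (by omega)).app (ModuleCat.of A A)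
    let F := shiftFunctor (HomotopyCategory (ModuleCat.{u} A) (ComplexShape.up ℤ)) (-j)
    set k := F.map φ.inv ≫ σ.hom ≫ g with hk
    have h1 : F.map biprod.inl ≫ k = 0 := horth _ (S.shift X₁ (-j) hX₁) hY
    have h2 : F.map biprod.inr ≫ k = 0 :=
      ((F.map_isZero hX₂).eq_of_src _ _ : F.map biprod.inr = 0) ▸ Limits.zero_comp
    have hmap : F.map (biprod.fst ≫ biprod.inl) + F.map (biprod.snd ≫ biprod.inr)
        = 𝟙 (F.obj (X₁ ⊞ X₂)) := by
      rw [← Functor.map_add, biprod.total, CategoryTheory.Functor.map_id]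
    have hk0 : k = 0 := by
      have hkk : k = (F.map (biprod.fst ≫ biprod.inl)
          + F.map (biprod.snd ≫ biprod.inr)) ≫ k := by
        rw [hmap, Category.id_comp]
      rw [hkk, Preadditive.add_comp, Functor.map_comp, Functor.map_comp, Category.assoc,
        Category.assoc, h1, h2, Limits.comp_zero, Limits.comp_zero, add_zero]
    have hσ : σ.hom ≫ g = F.map φ.hom ≫ k := by
      rw [hk, ← Functor.map_comp_assoc, φ.hom_inv_id, CategoryTheory.Functor.map_id, Category.id_comp]
    calc g = σ.inv ≫ (σ.hom ≫ g) := by rw [Iso.inv_hom_id_assoc]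
    _ = σ.inv ≫ F.map φ.hom ≫ k := by rw [hσ]
    _ = 0 := by rw [hk0, Limits.comp_zero, Limits.comp_zero]
  have hz : ∀ (j : ℤ) (f : (QF A).obj (Sgl A j) ⟶ (QF A).obj Z), f = 0 := by
    intro j f
    have hfy := key j (f ≫ ε.inv)
    calc f = (f ≫ ε.inv) ≫ ε.hom := by rw [Category.assoc, Iso.inv_hom_id, Category.comp_id]
    _ = 0 := by rw [hfy, Limits.zero_comp]
  have hex := exact_of_hom_zero Z hz
  have hcontr := contractHomotopy Z b (fun n hn => hbd n (Or.inr hn)) (fun n => (hZ n).2) hex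
  have hzero : Limits.IsZero ((QF A).obj Z) :=
    (HomotopyCategory.isZero_quotient_obj_iff Z).mpr ⟨hcontr⟩
  exact hzero.of_iso ε

end Main

theorem stmt11 (A : Type u) [CommRing A] [IsNoetherianRing A] [IsLocalRing A] :
    IsConnectedP (KbProjP A) := by
  constructor
  · exact ⟨(QF A).obj (Sgl A 0), kbProj_sgl A 0, sgl_nonzero A 0⟩
  · intro S₁ S₂ hS₁ hS₂ h12 h21 hdec
    obtain ⟨X₁, X₂, hX₁, hX₂, ⟨φ⟩⟩ := hdec _ (kbProj_sgl A 0)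
    set e := φ.hom ≫ biprod.fst ≫ biprod.inl ≫ φ.inv with he_def
    have he : e ≫ e = e := by
      rw [he_def]
      simp
    rcases sgl_idem A 0 e he with h0 | h1
    · left
      have c1 : biprod.inl ≫ φ.inv ≫ e ≫ φ.hom ≫ biprod.fst = 𝟙 X₁ := by
        rw [he_def]
        simp
      have c2 : biprod.inl ≫ φ.inv ≫ e ≫ φ.hom ≫ biprod.fst = 0 := by
        rw [h0]
        simp
      have hzX₁ : IsZero X₁ := (IsZero.iff_id_eq_zero X₁).mpr (c1.symm.trans c2)
      exact kill A S₂ S₁ h21 hS₁ X₂ X₁ hX₂ hzX₁ (φ ≪≫ biprod.braiding X₁ X₂)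
    · right
      have c1 : biprod.inr ≫ φ.inv ≫ e ≫ φ.hom ≫ biprod.snd = 0 := by
        rw [he_def]
        simp
      have c2 : biprod.inr ≫ φ.inv ≫ e ≫ φ.hom ≫ biprod.snd = 𝟙 X₂ := by
        rw [h1]
        simp
      have hzX₂ : IsZero X₂ := (IsZero.iff_id_eq_zero X₂).mpr (c2.symm.trans c1)
      exact kill A S₁ S₂ h12 hS₂ X₁ X₂ hX₁ hzX₂ φ
end

section
/- Let C be a Krull–Remak–Schmidt triangulated category such that the collection of thick subcategories of C forms a set. Then C decomposes as a direct sum of connected triangulated subcategories. -/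
/-!
STATEMENT 14: A Krull–Remak–Schmidt triangulated category whose thick subcategories form
a set decomposes as a direct sum of connected triangulated subcategories.
-/

open CategoryTheory Limits Pretriangulated Triangulated ZeroObject

universe v u

section Helpers

set_option linter.unusedSectionVars false

variable {E : Type u} [Category.{v} E] [HasZeroObject E] [HasShift E ℤ] [Preadditive E]
  [∀ n : ℤ, (shiftFunctor E n).Additive] [Pretriangulated E]

lemma aux_conj_ne_zero {X Y X' Y' : E} (e1 : X' ≅ X) (e2 : Y ≅ Y') {f : X ⟶ Y}
    (hf : f ≠ 0) : e1.hom ≫ f ≫ e2.hom ≠ 0 := by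
  intro h
  apply hf
  have : f = e1.inv ≫ (e1.hom ≫ f ≫ e2.hom) ≫ e2.inv := by simp
  rw [this, h]; simp

lemma aux_iso_hom_ne_zero {X Y : E} (e : X ≅ Y) (hX : ¬ IsZero X) : e.hom ≠ 0 := by
  intro h
  apply hX
  rw [IsZero.iff_id_eq_zero, ← e.hom_inv_id, h, zero_comp]

lemma indec_of_isLocalRing {X : E} (h : IsLocalRing (End X)) : Indec X := by
  constructor
  · intro hz
    exact one_ne_zero (α := End X) (hz.eq_of_src (𝟙 X) 0)
  · rintro Y Z ⟨e⟩
    by_contra hc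
    push_neg at hc
    obtain ⟨hY, hZ⟩ := hc
    set p₁ : End X := e.hom ≫ biprod.fst ≫ biprod.inl ≫ e.inv with hp₁
    set p₂ : End X := e.hom ≫ biprod.snd ≫ biprod.inr ≫ e.inv with hp₂
    have hadd : p₁ + p₂ = 1 := by
      rw [hp₁, hp₂]
      have hh : e.hom ≫ (biprod.fst ≫ biprod.inl + biprod.snd ≫ biprod.inr) ≫ e.inv
          = (1 : End X) := by
        rw [biprod.total, Category.id_comp, e.hom_inv_id]; rfl
      rw [← hh]
      simp only [Preadditive.comp_add, Preadditive.add_comp, Category.assoc]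
    have hid₁ : p₁ * p₁ = p₁ := by
      rw [End.mul_def, hp₁]; simp
    have hid₂ : p₂ * p₂ = p₂ := by
      rw [End.mul_def, hp₂]; simp
    have keyZ : p₂ = 0 → False := by
      intro hzero
      apply hZ
      have hz2 : (biprod.snd ≫ biprod.inr : Y ⊞ Z ⟶ Y ⊞ Z) = 0 := by
        have h3 : e.inv ≫ p₂ ≫ e.hom = biprod.snd ≫ biprod.inr := by
          rw [hp₂]; simp
        rw [← h3, hzero, zero_comp, comp_zero]
      rw [IsZero.iff_id_eq_zero]
      have := congrArg (fun f => biprod.inr ≫ f ≫ biprod.snd) hz2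
      simpa using this
    have keyY : p₁ = 0 → False := by
      intro hzero
      apply hY
      have hz2 : (biprod.fst ≫ biprod.inl : Y ⊞ Z ⟶ Y ⊞ Z) = 0 := by
        have h3 : e.inv ≫ p₁ ≫ e.hom = biprod.fst ≫ biprod.inl := by
          rw [hp₁]; simp
        rw [← h3, hzero, zero_comp, comp_zero]
      rw [IsZero.iff_id_eq_zero]
      have := congrArg (fun f => biprod.inl ≫ f ≫ biprod.fst) hz2
      simpa using this
    rcases IsLocalRing.isUnit_or_isUnit_of_add_one (a := p₁) (b := p₂) hadd with hu | hu
    · have hone : p₁ = 1 :=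
        hu.mul_left_cancel (by rw [mul_one, hid₁])
      exact keyZ (by have h' : p₂ = 1 - p₁ := eq_sub_of_add_eq' hadd; rw [h', hone, sub_self])
    · have hone : p₂ = 1 :=
        hu.mul_left_cancel (by rw [mul_one, hid₂])
      exact keyY (by have h' : p₁ = 1 - p₂ := eq_sub_of_add_eq hadd; rw [h', hone, sub_self])

lemma hom_to_sumList_eq_zero {X : E} :
    ∀ (m : List E), (∀ B ∈ m, ∀ g : X ⟶ B, g = 0) → ∀ f : X ⟶ sumList m, f = 0
  | [], _, f => (isZero_zero E).eq_of_tgt f 0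
  | B :: m, h, f => by
    apply biprod.hom_ext
    · exact (h B List.mem_cons_self _).trans zero_comp.symm
    · exact (hom_to_sumList_eq_zero m (fun B' hB' => h B' (List.mem_cons_of_mem _ hB')) _).trans
        zero_comp.symm

lemma hom_from_sumList_eq_zero {Y : E} :
    ∀ (l : List E), (∀ A ∈ l, ∀ g : A ⟶ Y, g = 0) → ∀ f : sumList l ⟶ Y, f = 0
  | [], _, f => (isZero_zero E).eq_of_src f 0
  | A :: l, h, f => by
    apply biprod.hom_ext'
    · exact (h A List.mem_cons_self _).trans comp_zero.symm
    · exact (hom_from_sumList_eq_zero l (fun A' hA' => h A' (List.mem_cons_of_mem _ hA')) _).trans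
        comp_zero.symm

lemma isZero_sumList : ∀ (l : List E), (∀ Y ∈ l, IsZero Y) → IsZero (sumList l)
  | [], _ => isZero_zero E
  | Y :: l, h => by
    have : IsZero (Y ⊞ sumList l) := by
      rw [biprod_isZero_iff]
      exact ⟨h Y List.mem_cons_self,
        isZero_sumList l (fun Y' hY' => h Y' (List.mem_cons_of_mem _ hY'))⟩
    exact this

/-- An additive endofunctor preserves binary biproducts (explicit iso). -/
noncomputable def addMapBiprod (F : E ⥤ E) [F.Additive] (X Y : E) :
    F.obj (X ⊞ Y) ≅ F.obj X ⊞ F.obj Y where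
  hom := biprod.lift (F.map biprod.fst) (F.map biprod.snd)
  inv := biprod.desc (F.map biprod.inl) (F.map biprod.inr)
  hom_inv_id := by
    rw [biprod.lift_desc, ← F.map_comp, ← F.map_comp, ← F.map_add, biprod.total, F.map_id]
  inv_hom_id := by
    apply biprod.hom_ext' <;> apply biprod.hom_ext <;>
      simp [← Functor.map_comp]

lemma isZero_shift_of_isZero {X : E} (h : IsZero X) (n : ℤ) : IsZero (X⟦n⟧) :=
  (shiftFunctor E n).map_isZero h

lemma isZero_of_isZero_shift {X : E} {n : ℤ} (h : IsZero (X⟦n⟧)) : IsZero X :=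
  (((shiftFunctor E (-n)).map_isZero h).of_iso (shiftShiftNeg X n).symm)

/-- permuted biproduct iso -/
noncomputable def biprodPerm (A Y W : E) : A ⊞ (Y ⊞ W) ≅ Y ⊞ (A ⊞ W) where
  hom := biprod.lift (biprod.snd ≫ biprod.fst) (biprod.lift biprod.fst (biprod.snd ≫ biprod.snd))
  inv := biprod.lift (biprod.snd ≫ biprod.fst) (biprod.lift biprod.fst (biprod.snd ≫ biprod.snd))
  hom_inv_id := by aesop_cat
  inv_hom_id := by aesop_cat

lemma sumList_summand : ∀ (l : List E) (Y : E), Y ∈ l → ∃ W : E, Nonempty (sumList l ≅ Y ⊞ W)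
  | A :: l, Y, h => by
    rcases List.mem_cons.1 h with rfl | h
    · exact ⟨sumList l, ⟨Iso.refl _⟩⟩
    · obtain ⟨W, ⟨e⟩⟩ := sumList_summand l Y h
      refine ⟨A ⊞ W, ⟨?_⟩⟩
      exact (biprod.mapIso (Iso.refl A) e).trans (biprodPerm A Y W)

lemma sumList_shift (n : ℤ) :
    ∀ l : List E, Nonempty ((sumList l)⟦n⟧ ≅ sumList (l.map (fun Y => Y⟦n⟧)))
  | [] => ⟨(shiftFunctor E n).mapZeroObject⟩
  | X :: l => by
    obtain ⟨e⟩ := sumList_shift n l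
    exact ⟨(addMapBiprod (shiftFunctor E n) X (sumList l)).trans
      (biprod.mapIso (Iso.refl _) e)⟩

lemma indec_shift {X : E} (hX : Indec X) (n : ℤ) : Indec (X⟦n⟧) := by
  constructor
  · intro hz
    exact hX.1 (isZero_of_isZero_shift hz)
  · rintro Y Z ⟨e⟩
    have e2 : X ≅ Y⟦-n⟧ ⊞ Z⟦-n⟧ :=
      (shiftShiftNeg X n).symm.trans (((shiftFunctor E (-n)).mapIso e).trans
        (addMapBiprod (shiftFunctor E (-n)) Y Z))
    rcases hX.2 _ _ ⟨e2⟩ with h | h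
    · exact Or.inl (((shiftFunctor E n).map_isZero h).of_iso (shiftNegShift Y n).symm)
    · exact Or.inr (((shiftFunctor E n).map_isZero h).of_iso (shiftNegShift Z n).symm)

end Helpers

section Main

set_option linter.unusedSectionVars false

variable {E : Type u} [Category.{v} E] [HasZeroObject E] [HasShift E ℤ] [Preadditive E]
  [∀ n : ℤ, (shiftFunctor E n).Additive] [Pretriangulated E]

/-- Generating relation on indecomposable objects: a nonzero morphism in either direction,
or being a shift. -/
def indecRel : {X : E // Indec X} → {X : E // Indec X} → Prop := fun a b =>
  (∃ f : a.1 ⟶ b.1, f ≠ 0) ∨ (∃ f : b.1 ⟶ a.1, f ≠ 0) ∨ (∃ n : ℤ, Nonempty (b.1 ≅ a.1⟦n⟧))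

/-- The type of "connected components" of indecomposables. -/
def IndecCl (E : Type u) [Category.{v} E] [HasZeroObject E] [HasShift E ℤ] [Preadditive E]
    [∀ n : ℤ, (shiftFunctor E n).Additive] [Pretriangulated E] : Type u :=
  Quotient (Relation.EqvGen.setoid (indecRel (E := E)))

/-- The class of an indecomposable object. -/
def mkCl {X : E} (h : Indec X) : IndecCl E :=
  Quotient.mk (Relation.EqvGen.setoid (indecRel (E := E))) ⟨X, h⟩

lemma mkCl_eq_of_hom {A B : E} (hA : Indec A) (hB : Indec B) (f : A ⟶ B) (hf : f ≠ 0) :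
    mkCl hA = mkCl hB :=
  Quotient.sound (Relation.EqvGen.rel _ _ (Or.inl ⟨f, hf⟩))

lemma mkCl_shift {A : E} (hA : Indec A) (n : ℤ) : mkCl (indec_shift hA n) = mkCl hA :=
  (Quotient.sound (Relation.EqvGen.rel (⟨A, hA⟩ : {X : E // Indec X}) ⟨A⟦n⟧, indec_shift hA n⟩
    (Or.inr (Or.inr ⟨n, ⟨Iso.refl _⟩⟩)))).symm

/-- The objects of the connected summand associated to a component `α`. -/
def classP (α : IndecCl E) (X : E) : Prop :=
  ∃ l : List E, (∀ Y ∈ l, ∃ hY : Indec Y, mkCl hY = α) ∧ Nonempty (X ≅ sumList l)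

lemma classP_of_indec {X : E} (hX : Indec X) : classP (mkCl hX) X :=
  ⟨[X], fun Y hY => by
    rw [List.mem_singleton] at hY
    subst hY
    exact ⟨hX, rfl⟩, ⟨isoBiprodZero (isZero_zero E)⟩⟩

lemma hom_to_classP_eq_zero {α : IndecCl E} {X Y : E} (hY : classP α Y)
    (hX : ∀ (B : E) (hB : Indec B), mkCl hB = α → ∀ g : X ⟶ B, g = 0) (f : X ⟶ Y) : f = 0 := by
  obtain ⟨m, hm, ⟨e⟩⟩ := hY
  have h0 : f ≫ e.hom = 0 := by
    apply hom_to_sumList_eq_zero m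
    intro B hB g
    obtain ⟨hBi, hcl⟩ := hm B hB
    exact hX B hBi hcl g
  calc f = (f ≫ e.hom) ≫ e.inv := by simp
  _ = 0 := by rw [h0, zero_comp]

lemma hom_from_classP_eq_zero {α : IndecCl E} {X Y : E} (hX : classP α X)
    (h : ∀ (B : E) (hB : Indec B), mkCl hB = α → ∀ g : B ⟶ Y, g = 0) (f : X ⟶ Y) : f = 0 := by
  obtain ⟨m, hm, ⟨e⟩⟩ := hX
  have h0 : e.inv ≫ f = 0 := by
    apply hom_from_sumList_eq_zero m
    intro B hB g
    obtain ⟨hBi, hcl⟩ := hm B hB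
    exact h B hBi hcl g
  calc f = e.hom ≫ (e.inv ≫ f) := by simp
  _ = 0 := by rw [h0, comp_zero]

lemma classP_homOrth {α β : IndecCl E} (hne : α ≠ β) : HomOrth (classP α) (classP β) := by
  intro X Y f hX hY
  apply hom_from_classP_eq_zero hX
  intro A hA hclA g
  apply hom_to_classP_eq_zero hY
  intro B hB hclB q
  by_contra hq
  exact hne (hclA ▸ hclB ▸ mkCl_eq_of_hom hA hB q hq)

lemma classP_closedIso (α : IndecCl E) : ObjectProperty.IsClosedUnderIsomorphisms (classP α) where
  of_iso := by
    rintro X Y e ⟨l, hl, ⟨e'⟩⟩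
    exact ⟨l, hl, ⟨e.symm.trans e'⟩⟩

/-- The triangulated subcategory associated to a connected component. -/
noncomputable def classSub (hKRS : IsKrullSchmidtCat (E := E)) (α : IndecCl E) :
    Triangulated.Subcategory E where
  P := classP α
  zero' := ⟨0, isZero_zero E, [], by simp, ⟨Iso.refl _⟩⟩
  shift X n hX := by
    obtain ⟨l, hl, ⟨e⟩⟩ := hX
    obtain ⟨es⟩ := sumList_shift n l
    refine ⟨l.map (fun Y => Y⟦n⟧), ?_, ⟨((shiftFunctor E n).mapIso e).trans es⟩⟩
    intro Y hY
    obtain ⟨Z, hZ, rfl⟩ := List.mem_map.1 hY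
    obtain ⟨hZi, hcl⟩ := hl Z hZ
    exact ⟨indec_shift hZi n, by rw [mkCl_shift]; exact hcl⟩
  ext₂' T hT h1 h3 := by
    obtain ⟨l, hloc, ⟨e⟩⟩ := hKRS T.obj₂
    refine ⟨T.obj₂, ⟨l, ?_, ⟨e⟩⟩, ⟨Iso.refl _⟩⟩
    intro Y hY
    have hYi : Indec Y := indec_of_isLocalRing (hloc Y hY)
    refine ⟨hYi, ?_⟩
    by_contra hne
    obtain ⟨W, ⟨e2⟩⟩ := sumList_summand l Y hY
    set i : Y ⟶ T.obj₂ := biprod.inl ≫ e2.inv ≫ e.inv with hi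
    set p : T.obj₂ ⟶ Y := e.hom ≫ e2.hom ≫ biprod.fst with hp
    have hip : i ≫ p = 𝟙 Y := by
      rw [hi, hp]; simp
    have h2 : i ≫ T.mor₂ = 0 := by
      apply hom_to_classP_eq_zero h3
      intro B hB hcl g
      by_contra hg
      exact hne (by rw [mkCl_eq_of_hom hYi hB g hg]; exact hcl)
    obtain ⟨g, hg⟩ := Triangle.coyoneda_exact₂ T hT i h2
    have h4 : T.mor₁ ≫ p = 0 := by
      apply hom_from_classP_eq_zero h1
      intro B hB hcl q
      by_contra hq
      exact hne (by rw [← mkCl_eq_of_hom hB hYi q hq]; exact hcl)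
    have hid : 𝟙 Y = 0 := by
      rw [← hip, hg, Category.assoc, h4, comp_zero]
    exact hYi.1 ((IsZero.iff_id_eq_zero Y).2 hid)

lemma classP_connected (α : IndecCl E) : IsConnectedP (classP α) := by
  constructor
  · obtain ⟨a, ha⟩ := Quotient.exists_rep α
    exact ⟨a.1, ha ▸ classP_of_indec a.2, a.2.1⟩
  · intro S₁ S₂ hsub1 hsub2 h12 h21 hdec
    by_contra hcon
    push_neg at hcon
    obtain ⟨⟨Z₁, hZ₁, hZ₁0⟩, ⟨Z₂, hZ₂, hZ₂0⟩⟩ := hcon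
    have hside : ∀ (Y : E) (hY : Indec Y), mkCl hY = α →
        (∃ A, S₁.P A ∧ Nonempty (Y ≅ A)) ∨ (∃ B, S₂.P B ∧ Nonempty (Y ≅ B)) := by
      intro Y hY hcl
      obtain ⟨X₁, X₂, hX₁, hX₂, ⟨e⟩⟩ := hdec Y (hcl ▸ classP_of_indec hY)
      rcases hY.2 _ _ ⟨e⟩ with h | h
      · exact Or.inr ⟨X₂, hX₂, ⟨e.trans (isoZeroBiprod h).symm⟩⟩
      · exact Or.inl ⟨X₁, hX₁, ⟨e.trans (isoBiprodZero h).symm⟩⟩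
    have hexcl : ∀ (Y : E), ¬ IsZero Y →
        (∃ A, S₁.P A ∧ Nonempty (Y ≅ A)) → (∃ B, S₂.P B ∧ Nonempty (Y ≅ B)) → False := by
      rintro Y hY0 ⟨A, hA, ⟨eA⟩⟩ ⟨B, hB, ⟨eB⟩⟩
      have hne : eA.inv ≫ eB.hom ≠ 0 := by
        intro h
        apply hY0
        rw [IsZero.iff_id_eq_zero]
        calc 𝟙 Y = eA.hom ≫ (eA.inv ≫ eB.hom) ≫ eB.inv := by simp
        _ = 0 := by rw [h, zero_comp, comp_zero]
      exact hne (h12 _ hA hB)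
    have hconst : ∀ a b : {X : E // Indec X}, Relation.EqvGen indecRel a b →
        mkCl a.2 = α →
        ((∃ A, S₁.P A ∧ Nonempty (a.1 ≅ A)) ↔ (∃ A, S₁.P A ∧ Nonempty (b.1 ≅ A))) := by
      intro a b h
      induction h with
      | rel x y hxy =>
        intro hclx
        have hxy' : mkCl x.2 = mkCl y.2 := Quotient.sound (Relation.EqvGen.rel _ _ hxy)
        have hcly : mkCl y.2 = α := hxy' ▸ hclx
        constructor
        · intro hx
          rcases hside y.1 y.2 hcly with h' | h'
          · exact h'
          · exfalso
            obtain ⟨A, hA, ⟨eA⟩⟩ := hx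
            obtain ⟨B, hB, ⟨eB⟩⟩ := h'
            rcases hxy with ⟨f, hf⟩ | ⟨f, hf⟩ | ⟨n, ⟨eS⟩⟩
            · exact aux_conj_ne_zero eA.symm eB hf (h12 _ hA hB)
            · exact aux_conj_ne_zero eB.symm eA hf (h21 _ hB hA)
            · exact hexcl y.1 y.2.1
                ⟨A⟦n⟧, S₁.shift A n hA, ⟨eS.trans ((shiftFunctor E n).mapIso eA)⟩⟩
                ⟨B, hB, ⟨eB⟩⟩
        · intro hy
          rcases hside x.1 x.2 hclx with h' | h'
          · exact h'
          · exfalso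
            obtain ⟨A, hA, ⟨eA⟩⟩ := hy
            obtain ⟨B, hB, ⟨eB⟩⟩ := h'
            rcases hxy with ⟨f, hf⟩ | ⟨f, hf⟩ | ⟨n, ⟨eS⟩⟩
            · exact aux_conj_ne_zero eB.symm eA hf (h21 _ hB hA)
            · exact aux_conj_ne_zero eA.symm eB hf (h12 _ hA hB)
            · exact hexcl x.1 x.2.1
                ⟨A⟦(-n)⟧, S₁.shift A (-n) hA,
                  ⟨(shiftShiftNeg x.1 n).symm.trans
                    ((shiftFunctor E (-n)).mapIso (eS.symm.trans eA))⟩⟩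
                ⟨B, hB, ⟨eB⟩⟩
      | refl x => intro _; rfl
      | symm x y hxy ih =>
        intro hcly
        have hxy' : mkCl x.2 = mkCl y.2 := Quotient.sound hxy
        exact (ih (hxy'.trans hcly)).symm
      | trans x y z hxy _ ih1 ih2 =>
        intro hclx
        have hxy' : mkCl x.2 = mkCl y.2 := Quotient.sound hxy
        exact (ih1 hclx).trans (ih2 (hxy' ▸ hclx))
    have hfind : ∀ (Z : E), classP α Z → ¬ IsZero Z →
        ∃ (W : E) (hW : Indec W) (p : Z ⟶ W), mkCl hW = α ∧ p ≠ 0 := by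
      intro Z hZ hZ0
      obtain ⟨l, hl, ⟨e⟩⟩ := hZ
      have hex : ∃ Y ∈ l, ¬ IsZero Y := by
        by_contra h
        push_neg at h
        exact hZ0 ((isZero_sumList l h).of_iso e)
      obtain ⟨Y, hYl, hY0⟩ := hex
      obtain ⟨hYi, hcl⟩ := hl Y hYl
      obtain ⟨W', ⟨e2⟩⟩ := sumList_summand l Y hYl
      refine ⟨Y, hYi, e.hom ≫ e2.hom ≫ biprod.fst, hcl, ?_⟩
      intro h0
      apply hY0
      rw [IsZero.iff_id_eq_zero]
      calc 𝟙 Y = (biprod.inl ≫ e2.inv ≫ e.inv) ≫ (e.hom ≫ e2.hom ≫ biprod.fst) := by simp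
      _ = 0 := by rw [h0, comp_zero]
    obtain ⟨W₁, hW₁, p₁, hcl₁, hp₁⟩ := hfind Z₁ (hsub1 Z₁ hZ₁) hZ₁0
    obtain ⟨W₂, hW₂, p₂, hcl₂, hp₂⟩ := hfind Z₂ (hsub2 Z₂ hZ₂) hZ₂0
    have hW₁s : ∃ A, S₁.P A ∧ Nonempty (W₁ ≅ A) := by
      rcases hside W₁ hW₁ hcl₁ with h | h
      · exact h
      · exfalso
        obtain ⟨B, hB, ⟨eB⟩⟩ := h
        have hne : p₁ ≫ eB.hom ≠ 0 := by
          intro h0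
          apply hp₁
          calc p₁ = (p₁ ≫ eB.hom) ≫ eB.inv := by simp
          _ = 0 := by rw [h0, zero_comp]
        exact hne (h12 _ hZ₁ hB)
    have hW₂s : ∃ B, S₂.P B ∧ Nonempty (W₂ ≅ B) := by
      rcases hside W₂ hW₂ hcl₂ with h | h
      · exfalso
        obtain ⟨A, hA, ⟨eA⟩⟩ := h
        have hne : p₂ ≫ eA.hom ≠ 0 := by
          intro h0
          apply hp₂
          calc p₂ = (p₂ ≫ eA.hom) ≫ eA.inv := by simp
          _ = 0 := by rw [h0, zero_comp]
        exact hne (h21 _ hZ₂ hA)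
      · exact h
    have hgen : Relation.EqvGen indecRel (⟨W₁, hW₁⟩ : {X : E // Indec X}) ⟨W₂, hW₂⟩ :=
      Quotient.exact (hcl₁.trans hcl₂.symm)
    exact hexcl W₂ hW₂.1 ((hconst _ _ hgen hcl₁).1 hW₁s) hW₂s

end Main

theorem stmt14 {C : Type u} [Category.{v} C] [HasZeroObject C] [HasShift C ℤ] [Preadditive C]
    [∀ n : ℤ, (shiftFunctor C n).Additive] [Pretriangulated C]
    (hKRS : IsKrullSchmidtCat (E := C))
    (hset : Small.{v} {S : Triangulated.Subcategory C // IsThick S}) :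
    ∃ (ι : Type (max u v)) (S : ι → Triangulated.Subcategory C),
      (∀ i, IsConnectedP (S i).P) ∧ IsDirectSumDecomp S := by
  refine ⟨ULift.{v} (IndecCl C), fun i => classSub hKRS i.down, ?_, ?_, ?_, ?_⟩
  · intro i
    exact classP_connected i.down
  · intro i
    exact classP_closedIso i.down
  · intro i j hij
    have hd : i.down ≠ j.down := by
      intro h
      apply hij
      cases i; cases j; cases h; rfl
    exact classP_homOrth hd
  · intro X
    obtain ⟨l, hloc, he⟩ := hKRS X
    refine ⟨l, fun Y hY => ?_, he⟩
    have hYi := indec_of_isLocalRing (hloc Y hY)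
    exact ⟨⟨mkCl hYi⟩, classP_of_indec hYi⟩
end
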